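/- Weak limits of superlinear powers dominate the weak limit (convexity/lower-semicontinuity step of the saturation relation): Let Q be a measurable subset of ℝ^N of finite Lebesgue measure and M > 0. For each γ > 1 let p_γ : Q → [0,M] be measurable, and suppose p_γ ⇀ p weakly in L²(Q) and p_γ^{(γ+1)/γ} ⇀ v weakly in L²(Q) as γ → ∞. Then v ≥ p almost everywhere in Q. -/

import Mathlib

open MeasureTheory Real Set Filter Topology

noncomputable section

/-- Key pointwise inequality: `x - 1/γ ≤ x ^ ((γ+1)/γ)` for `x ≥ 0`, `γ > 1`. -/
lemma pow_key_aux {γ x : ℝ} (hγ : 1 < γ) (hx0 : 0 ≤ x) :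
    x - 1 / γ ≤ x ^ ((γ + 1) / γ) := by
  have hγ0 : (0 : ℝ) < γ := one_pos.trans hγ
  rcases hx0.eq_or_lt with h | h
  · rw [← h, Real.zero_rpow (by positivity)]
    have : 0 < 1 / γ := by positivity
    linarith
  · have hexp : x ^ ((γ + 1) / γ) = x * Real.exp (Real.log x / γ) := by
      rw [Real.rpow_def_of_pos h,
        show Real.log x * ((γ + 1) / γ) = Real.log x + Real.log x / γ by
          field_simp,
        Real.exp_add, Real.exp_log h]
    have h1 : 1 + Real.log x / γ ≤ Real.exp (Real.log x / γ) := by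
      have := Real.add_one_le_exp (Real.log x / γ); linarith
    have h2 : x * (1 + Real.log x / γ) ≤ x * Real.exp (Real.log x / γ) :=
      mul_le_mul_of_nonneg_left h1 h.le
    have h3 : -1 ≤ x * Real.log x := by
      have hli : Real.log (1 / x) ≤ 1 / x - 1 := Real.log_le_sub_one_of_pos (by positivity)
      rw [one_div, Real.log_inv] at hli
      have := mul_le_mul_of_nonneg_left hli h.le
      rw [mul_sub, mul_inv_cancel₀ h.ne'] at this
      nlinarith
    have h4 : x - 1 / γ ≤ x * (1 + Real.log x / γ) := by
      have key : 0 ≤ (x * Real.log x + 1) / γ := div_nonneg (by linarith) hγ0.le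
      have heq : x * (1 + Real.log x / γ) - (x - 1 / γ) = (x * Real.log x + 1) / γ := by
        field_simp; ring
      linarith
    calc x - 1 / γ ≤ x * (1 + Real.log x / γ) := h4
      _ ≤ x ^ ((γ + 1) / γ) := hexp ▸ h2

/-- **Weak limits of superlinear powers dominate the weak limit.**
If `0 ≤ p_γ ≤ M` on a finite-measure set `Q`, `p_γ ⇀ p` weakly in `L²(Q)` and
`p_γ^{(γ+1)/γ} ⇀ v` weakly in `L²(Q)` as `γ → ∞`, then `v ≥ p` a.e. in `Q`. -/
theorem weak_limit_of_powers_dominates (N : ℕ) (Q : Set (EuclideanSpace ℝ (Fin N)))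
    (hQ : MeasurableSet Q) (hQfin : volume Q < ⊤) (M : ℝ) (hM : 0 < M)
    (p : ℝ → EuclideanSpace ℝ (Fin N) → ℝ)
    (plim v : EuclideanSpace ℝ (Fin N) → ℝ)
    (hmeas : ∀ γ : ℝ, 1 < γ → Measurable (p γ))
    (hmeasp : Measurable plim) (hmeasv : Measurable v)
    (hbd : ∀ γ : ℝ, 1 < γ → ∀ x ∈ Q, p γ x ∈ Set.Icc 0 M)
    (hweakp : ∀ g : EuclideanSpace ℝ (Fin N) → ℝ, MemLp g 2 (volume.restrict Q) →
      Tendsto (fun γ : ℝ => ∫ x in Q, p γ x * g x) atTop (nhds (∫ x in Q, plim x * g x)))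
    (hweakv : ∀ g : EuclideanSpace ℝ (Fin N) → ℝ, MemLp g 2 (volume.restrict Q) →
      Tendsto (fun γ : ℝ => ∫ x in Q, p γ x ^ ((γ + 1) / γ) * g x) atTop
        (nhds (∫ x in Q, v x * g x))) :
    ∀ᵐ x ∂volume.restrict Q, plim x ≤ v x := by
  -- integrability helper
  have intbd : ∀ (f : EuclideanSpace ℝ (Fin N) → ℝ) (C : ℝ), Measurable f →
      (∀ x ∈ Q, |f x| ≤ C) → IntegrableOn f Q volume := by
    intro f C hf hb
    refine (integrableOn_const (C := C) hQfin.ne) |>.mono'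
      hf.aestronglyMeasurable ?_
    refine (ae_restrict_iff' hQ).2 (ae_of_all _ fun x hx => ?_)
    simpa [Real.norm_eq_abs] using hb x hx
  -- Main step: for every measurable A ⊆ Q, ∫_A plim ≤ ∫_A v.
  have main : ∀ A : Set (EuclideanSpace ℝ (Fin N)), MeasurableSet A → A ⊆ Q →
      ∫ x in A, plim x ≤ ∫ x in A, v x := by
    intro A hA hAQ
    set g : EuclideanSpace ℝ (Fin N) → ℝ := A.indicator (fun _ => 1) with hgdef
    have hgmeas : Measurable g := measurable_const.indicator hA
    have hg01 : ∀ x, 0 ≤ g x ∧ g x ≤ 1 := by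
      intro x; by_cases hx : x ∈ A <;> simp [hgdef, Set.indicator_apply, hx]
    have hAfin : volume A < ⊤ := (measure_mono hAQ).trans_lt hQfin
    have hgLp : MemLp g 2 (volume.restrict Q) := by
      refine memLp_indicator_const 2 hA 1 (Or.inr ?_)
      rw [Measure.restrict_apply hA]
      exact ((measure_mono Set.inter_subset_left).trans_lt hAfin).ne
    have hgint : IntegrableOn g Q volume :=
      intbd g 1 hgmeas fun x _ => by
        rcases hg01 x with ⟨h0, h1⟩; rw [abs_of_nonneg h0]; exact h1
    have hredo : ∀ f : EuclideanSpace ℝ (Fin N) → ℝ,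
        (∫ x in Q, f x * g x) = ∫ x in A, f x := by
      intro f
      have hfe : (fun x => f x * g x) = A.indicator f := by
        funext x; by_cases hx : x ∈ A <;> simp [hgdef, Set.indicator_apply, hx]
      rw [hfe, integral_indicator hA, Measure.restrict_restrict hA,
        Set.inter_eq_left.mpr hAQ]
    have hC : (∫ x in Q, g x) = (volume A).toReal := by
      have : (∫ x in Q, g x) = ∫ x in A, (1:ℝ) := by
        simpa using hredo (fun _ => (1:ℝ))
      rw [this, setIntegral_const, smul_eq_mul, mul_one, measureReal_def]
    -- the eventual inequality
    have hev : ∀ᶠ γ in atTop,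
        (∫ x in Q, p γ x * g x) - 1 / γ * (volume A).toReal ≤
          ∫ x in Q, p γ x ^ ((γ + 1) / γ) * g x := by
      filter_upwards [eventually_gt_atTop (1:ℝ)] with γ hγ
      have hγ0 : (0:ℝ) < γ := one_pos.trans hγ
      have hm := hmeas γ hγ
      have hb := hbd γ hγ
      have hint1 : IntegrableOn (fun x => p γ x * g x) Q volume := by
        refine intbd _ M (hm.mul hgmeas) fun x hx => ?_
        rcases hb x hx with ⟨h0, h1⟩
        rcases hg01 x with ⟨hg0, hg1⟩
        rw [abs_of_nonneg (mul_nonneg h0 hg0)]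
        calc p γ x * g x ≤ M * 1 := mul_le_mul h1 hg1 hg0 hM.le
          _ = M := mul_one M
      have hint2 : IntegrableOn (fun x => p γ x ^ ((γ + 1) / γ) * g x) Q volume := by
        refine intbd _ (max 1 M ^ (2:ℝ)) (((Real.continuous_rpow_const (by positivity)).measurable.comp hm).mul hgmeas) fun x hx => ?_
        rcases hb x hx with ⟨h0, h1⟩
        rcases hg01 x with ⟨hg0, hg1⟩
        have hp0 : 0 ≤ p γ x ^ ((γ + 1) / γ) := Real.rpow_nonneg h0 _
        rw [abs_of_nonneg (mul_nonneg hp0 hg0)]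
        have hstep : p γ x ^ ((γ + 1) / γ) ≤ max 1 M ^ ((γ + 1) / γ) :=
          Real.rpow_le_rpow h0 (h1.trans (le_max_right 1 M)) (by positivity)
        have hstep2 : max 1 M ^ ((γ + 1) / γ) ≤ max 1 M ^ (2:ℝ) := by
          refine Real.rpow_le_rpow_of_exponent_le (le_max_left 1 M) ?_
          rw [div_le_iff₀ hγ0]; linarith
        calc p γ x ^ ((γ + 1) / γ) * g x ≤ max 1 M ^ (2:ℝ) * 1 :=
              mul_le_mul (hstep.trans hstep2) hg1 hg0 (by positivity)
          _ = max 1 M ^ (2:ℝ) := mul_one _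
      have hmono : (∫ x in Q, (p γ x * g x - 1 / γ * g x)) ≤
          ∫ x in Q, p γ x ^ ((γ + 1) / γ) * g x := by
        refine integral_mono_ae (hint1.sub (hgint.const_mul _)) hint2 ?_
        refine (ae_restrict_iff' hQ).2 (ae_of_all _ fun x hx => ?_)
        have key := pow_key_aux hγ (hb x hx).1
        have := mul_le_mul_of_nonneg_right key (hg01 x).1
        calc p γ x * g x - 1 / γ * g x = (p γ x - 1 / γ) * g x := by ring
          _ ≤ p γ x ^ ((γ + 1) / γ) * g x := this
      calc (∫ x in Q, p γ x * g x) - 1 / γ * (volume A).toReal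
          = (∫ x in Q, p γ x * g x) - 1 / γ * ∫ x in Q, g x := by rw [hC]
        _ = (∫ x in Q, p γ x * g x) - ∫ x in Q, 1 / γ * g x := by
            rw [integral_const_mul]
        _ = ∫ x in Q, (p γ x * g x - 1 / γ * g x) := by
            rw [integral_sub hint1 (hgint.const_mul _)]
        _ ≤ ∫ x in Q, p γ x ^ ((γ + 1) / γ) * g x := hmono
    -- pass to the limit
    have hlim1 : Tendsto (fun γ : ℝ => (∫ x in Q, p γ x * g x)
        - 1 / γ * (volume A).toReal) atTop
        (nhds ((∫ x in Q, plim x * g x) - 0 * (volume A).toReal)) := by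
      refine (hweakp g hgLp).sub (Tendsto.mul_const _ ?_)
      exact tendsto_inv_atTop_zero.congr (fun x => (one_div x).symm)
    rw [zero_mul] at hlim1
    have hfin : (∫ x in Q, plim x * g x) - 0 ≤ ∫ x in Q, v x * g x :=
      le_of_tendsto_of_tendsto hlim1 (hweakv g hgLp) hev
    rw [sub_zero, hredo plim, hredo v] at hfin
    exact hfin
  -- Now conclude a.e. inequality via the exceptional sets B n.
  set B : ℕ → Set (EuclideanSpace ℝ (Fin N)) := fun n =>
    Q ∩ ({x | v x + 1 / (n + 1 : ℝ) ≤ plim x} ∩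
      ({x | |plim x| ≤ (n : ℝ) + 1} ∩ {x | |v x| ≤ (n : ℝ) + 1})) with hBdef
  have hBmeas : ∀ n, MeasurableSet (B n) := fun n =>
    hQ.inter ((measurableSet_le (hmeasv.add_const _) hmeasp).inter
      ((measurableSet_le hmeasp.abs measurable_const).inter
        (measurableSet_le hmeasv.abs measurable_const)))
  have hBQ : ∀ n, B n ⊆ Q := fun n => Set.inter_subset_left
  have hBnull : ∀ n, volume (B n) = 0 := by
    intro n
    have hBfin : volume (B n) < ⊤ := (measure_mono (hBQ n)).trans_lt hQfin
    have hintp : IntegrableOn plim (B n) volume := by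
      refine (integrableOn_const (C := (n:ℝ)+1) hBfin.ne) |>.mono'
        hmeasp.aestronglyMeasurable ?_
      refine (ae_restrict_iff' (hBmeas n)).2 (ae_of_all _ fun x hx => ?_)
      simpa [Real.norm_eq_abs] using hx.2.2.1
    have hintv : IntegrableOn v (B n) volume := by
      refine (integrableOn_const (C := (n:ℝ)+1) hBfin.ne) |>.mono'
        hmeasv.aestronglyMeasurable ?_
      refine (ae_restrict_iff' (hBmeas n)).2 (ae_of_all _ fun x hx => ?_)
      simpa [Real.norm_eq_abs] using hx.2.2.2
    have hmain := main (B n) (hBmeas n) (hBQ n)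
    have hge : 1 / (n + 1 : ℝ) * (volume (B n)).toReal ≤
        ∫ x in B n, (plim x - v x) := by
      refine setIntegral_ge_of_const_le_real (hBmeas n) hBfin.ne
        (fun x hx => ?_) (hintp.sub hintv)
      have := hx.2.1
      simp only [Set.mem_setOf_eq] at this
      linarith
    rw [integral_sub hintp hintv] at hge
    have htoReal : (volume (B n)).toReal = 0 := by
      have hpos : (0:ℝ) < 1 / (n + 1 : ℝ) := by positivity
      nlinarith [ENNReal.toReal_nonneg (a := volume (B n))]
    rcases (ENNReal.toReal_eq_zero_iff _).mp htoReal with h | h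
    · exact h
    · exact absurd h hBfin.ne
  rw [ae_restrict_iff' hQ, ae_iff]
  refine measure_mono_null (fun x hx => ?_) (measure_iUnion_null hBnull)
  simp only [Set.mem_setOf_eq, not_forall] at hx
  obtain ⟨hxQ, hxlt⟩ := hx
  push_neg at hxlt
  obtain ⟨n, hn⟩ := exists_nat_ge (max (1 / (plim x - v x)) (max |plim x| |v x|))
  refine Set.mem_iUnion.2 ⟨n, hxQ, ?_, ?_, ?_⟩
  · have hd : 0 < plim x - v x := sub_pos.2 hxlt
    have h1 : 1 / (plim x - v x) ≤ (n : ℝ) + 1 :=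
      ((le_max_left _ _).trans hn).trans (by linarith)
    have h2 : 1 / ((n : ℝ) + 1) ≤ plim x - v x := by
      have := one_div_le_one_div_of_le (by positivity : (0:ℝ) < 1 / (plim x - v x)) h1
      rwa [one_div_one_div] at this
    simp only [Set.mem_setOf_eq]
    linarith
  · exact ((le_max_left _ _).trans ((le_max_right _ _).trans hn)).trans (by linarith)
  · exact ((le_max_right _ _).trans ((le_max_right _ _).trans hn)).trans (by linarith)
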